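/- Every continuous group homomorphism from SU(3) to SU(2) is trivial. -/

import Mathlib

open Matrix Complex

noncomputable section SU3TrivialAux

local notation "SU2" => Matrix.specialUnitaryGroup (Fin 2) ℂ
local notation "SU3" => Matrix.specialUnitaryGroup (Fin 3) ℂ

private theorem circle_mul_conj (z : Circle) : (z : ℂ) * (starRingEnd ℂ) (z : ℂ) = 1 := by
  simp [Complex.mul_conj', Circle.norm_coe]

private theorem circle_coe_conj (z : Circle) : (starRingEnd ℂ) (z : ℂ) = ((z⁻¹ : Circle) : ℂ) := by
  rw [Circle.coe_inv]
  first
  | exact eq_inv_of_mul_eq_one_left (circle_mul_conj z)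
  | exact eq_inv_of_mul_eq_one_right (circle_mul_conj z)
  | · have h := circle_mul_conj z
      field_simp
      linear_combination h

private theorem dT_mem (z w : Circle) :
    Matrix.diagonal ![(z : ℂ), w, ((z * w)⁻¹ : Circle)] ∈ SU3 := by
  rw [Matrix.mem_specialUnitaryGroup_iff, Matrix.mem_unitaryGroup_iff]
  constructor
  · rw [Matrix.star_eq_conjTranspose, Matrix.diagonal_conjTranspose, Matrix.diagonal_mul_diagonal]
    ext i j
    fin_cases i <;> fin_cases j <;>
      simp [Matrix.diagonal_apply, Matrix.one_apply, Pi.star_apply, Complex.mul_conj,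
        Complex.normSq_eq_norm_sq, _root_.map_mul, map_inv₀, Circle.norm_coe]
  · rw [Matrix.det_diagonal, Fin.prod_univ_three]
    push_cast
    field_simp

private def T3 (z w : Circle) : ↥SU3 :=
  ⟨Matrix.diagonal ![(z : ℂ), w, ((z * w)⁻¹ : Circle)], dT_mem z w⟩

private theorem T3_mul (z w z' w' : Circle) : T3 z w * T3 z' w' = T3 (z * z') (w * w') := by
  apply Subtype.ext
  show (Matrix.diagonal ![(z : ℂ), w, ((z * w)⁻¹ : Circle)] *
      Matrix.diagonal ![(z' : ℂ), w', ((z' * w')⁻¹ : Circle)] : Matrix (Fin 3) (Fin 3) ℂ) =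
      Matrix.diagonal ![((z * z' : Circle) : ℂ), ((w * w' : Circle) : ℂ),
        (((z * z') * (w * w'))⁻¹ : Circle)]
  rw [Matrix.diagonal_mul_diagonal]
  ext i j
  fin_cases i <;> fin_cases j <;>
    simp [Matrix.diagonal_apply] <;> push_cast [mul_inv] <;> ring

private theorem T3_one : T3 1 1 = 1 := by
  apply Subtype.ext
  show (Matrix.diagonal ![((1 : Circle) : ℂ), ((1 : Circle) : ℂ),
      (((1 : Circle) * (1 : Circle))⁻¹ : Circle)] : Matrix (Fin 3) (Fin 3) ℂ) = 1
  ext i j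
  fin_cases i <;> fin_cases j <;> simp [Matrix.diagonal_apply, Matrix.one_apply]

private theorem su2_mem' {a b : ℂ} (h : a * (starRingEnd ℂ) a + b * (starRingEnd ℂ) b = 1) :
    !![a, b; -(starRingEnd ℂ) b, (starRingEnd ℂ) a] ∈ SU2 := by
  rw [Matrix.mem_specialUnitaryGroup_iff, Matrix.mem_unitaryGroup_iff]
  constructor
  · ext i j
    simp only [Matrix.star_eq_conjTranspose, Matrix.conjTranspose_apply, Matrix.mul_apply,
      Fin.sum_univ_two]
    fin_cases i <;> fin_cases j <;>
      · simp [Matrix.one_apply]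
        ring_nf
        try linear_combination h
  · rw [Matrix.det_fin_two]; simp; linear_combination h

private def mk2 (a b : ℂ) (h : a * (starRingEnd ℂ) a + b * (starRingEnd ℂ) b = 1) : ↥SU2 :=
  ⟨!![a, b; -(starRingEnd ℂ) b, (starRingEnd ℂ) a], su2_mem' h⟩

private def DW (z : Circle) : ↥SU2 :=
  ⟨!![(z : ℂ), 0; 0, ((z⁻¹ : Circle) : ℂ)], by
    have h : !![(z : ℂ), 0; 0, ((z⁻¹ : Circle) : ℂ)] =
        !![(z : ℂ), 0; -(starRingEnd ℂ) 0, (starRingEnd ℂ) (z : ℂ)] := by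
      rw [circle_coe_conj]; norm_num
    rw [h]
    exact su2_mem' (by simpa using circle_mul_conj z)⟩

private theorem DW_mul (z w : Circle) : DW z * DW w = DW (z * w) := by
  apply Subtype.ext
  show (!![(z : ℂ), 0; 0, ((z⁻¹ : Circle) : ℂ)] * !![(w : ℂ), 0; 0, ((w⁻¹ : Circle) : ℂ)]
      : Matrix (Fin 2) (Fin 2) ℂ) = !![((z * w : Circle) : ℂ), 0; 0, (((z * w)⁻¹ : Circle) : ℂ)]
  rw [Matrix.mul_fin_two]
  push_cast [mul_inv]
  norm_num

private theorem DW_one : DW 1 = 1 := by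
  apply Subtype.ext
  show (!![((1 : Circle) : ℂ), 0; 0, (((1 : Circle)⁻¹ : Circle) : ℂ)]
      : Matrix (Fin 2) (Fin 2) ℂ) = 1
  norm_num
  exact Matrix.one_fin_two.symm

private def E12m (x : Matrix (Fin 2) (Fin 2) ℂ) : Matrix (Fin 3) (Fin 3) ℂ :=
  !![x 0 0, x 0 1, 0; x 1 0, x 1 1, 0; 0, 0, 1]

private def E23m (x : Matrix (Fin 2) (Fin 2) ℂ) : Matrix (Fin 3) (Fin 3) ℂ :=
  !![1, 0, 0; 0, x 0 0, x 0 1; 0, x 1 0, x 1 1]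

private theorem E12m_mul (x y : Matrix (Fin 2) (Fin 2) ℂ) :
    E12m (x * y) = E12m x * E12m y := by
  ext i j
  fin_cases i <;> fin_cases j <;>
    simp [E12m, Matrix.mul_apply, Fin.sum_univ_two, Fin.sum_univ_three, Matrix.vecHead, Matrix.vecTail]

private theorem E23m_mul (x y : Matrix (Fin 2) (Fin 2) ℂ) :
    E23m (x * y) = E23m x * E23m y := by
  ext i j
  fin_cases i <;> fin_cases j <;>
    simp [E23m, Matrix.mul_apply, Fin.sum_univ_two, Fin.sum_univ_three, Matrix.vecHead, Matrix.vecTail]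

private theorem E12m_one : E12m 1 = 1 := by
  ext i j
  fin_cases i <;> fin_cases j <;> simp [E12m, Matrix.one_apply, Matrix.vecHead, Matrix.vecTail]

private theorem E23m_one : E23m 1 = 1 := by
  ext i j
  fin_cases i <;> fin_cases j <;> simp [E23m, Matrix.one_apply, Matrix.vecHead, Matrix.vecTail]

private theorem E12m_star (x : Matrix (Fin 2) (Fin 2) ℂ) : star (E12m x) = E12m (star x) := by
  ext i j
  fin_cases i <;> fin_cases j <;>
    simp [E12m, Matrix.star_eq_conjTranspose, Matrix.conjTranspose_apply, Matrix.vecHead, Matrix.vecTail]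

private theorem E23m_star (x : Matrix (Fin 2) (Fin 2) ℂ) : star (E23m x) = E23m (star x) := by
  ext i j
  fin_cases i <;> fin_cases j <;>
    simp [E23m, Matrix.star_eq_conjTranspose, Matrix.conjTranspose_apply, Matrix.vecHead, Matrix.vecTail]

private theorem E12m_mem {x : Matrix (Fin 2) (Fin 2) ℂ} (h : x ∈ SU2) : E12m x ∈ SU3 := by
  rw [Matrix.mem_specialUnitaryGroup_iff, Matrix.mem_unitaryGroup_iff] at h ⊢
  obtain ⟨hu, hd⟩ := h
  constructor
  · rw [E12m_star, ← E12m_mul, hu, E12m_one]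
  · rw [E12m]
    rw [Matrix.det_fin_three]
    simp
    rw [Matrix.det_fin_two] at hd
    linear_combination hd

private theorem E23m_mem {x : Matrix (Fin 2) (Fin 2) ℂ} (h : x ∈ SU2) : E23m x ∈ SU3 := by
  rw [Matrix.mem_specialUnitaryGroup_iff, Matrix.mem_unitaryGroup_iff] at h ⊢
  obtain ⟨hu, hd⟩ := h
  constructor
  · rw [E23m_star, ← E23m_mul, hu, E23m_one]
  · rw [E23m]
    rw [Matrix.det_fin_three]
    simp
    rw [Matrix.det_fin_two] at hd
    linear_combination hd

private def emb12 : ↥SU2 →* ↥SU3 where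
  toFun x := ⟨E12m x.1, E12m_mem x.2⟩
  map_one' := Subtype.ext (by simp only [Submonoid.coe_one, OneMemClass.coe_one, E12m_one])
  map_mul' x y := Subtype.ext (by
    show E12m (x.1 * y.1) = E12m x.1 * E12m y.1
    exact E12m_mul x.1 y.1)

private def emb23 : ↥SU2 →* ↥SU3 where
  toFun x := ⟨E23m x.1, E23m_mem x.2⟩
  map_one' := Subtype.ext (by simp only [Submonoid.coe_one, OneMemClass.coe_one, E23m_one])
  map_mul' x y := Subtype.ext (by
    show E23m (x.1 * y.1) = E23m x.1 * E23m y.1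
    exact E23m_mul x.1 y.1)

private theorem emb12_apply (x : ↥SU2) : (emb12 x : Matrix (Fin 3) (Fin 3) ℂ) =
    !![x.1 0 0, x.1 0 1, 0; x.1 1 0, x.1 1 1, 0; 0, 0, 1] := rfl

private theorem emb23_apply (x : ↥SU2) : (emb23 x : Matrix (Fin 3) (Fin 3) ℂ) =
    !![1, 0, 0; 0, x.1 0 0, x.1 0 1; 0, x.1 1 0, x.1 1 1] := rfl

private theorem emb12_DW (z : Circle) : emb12 (DW z) = T3 z z⁻¹ := by
  apply Subtype.ext
  show E12m (DW z).1 = (Matrix.diagonal ![(z : ℂ), (z⁻¹ : Circle), ((z * z⁻¹)⁻¹ : Circle)]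
      : Matrix (Fin 3) (Fin 3) ℂ)
  ext i j
  fin_cases i <;> fin_cases j <;>
    simp [E12m, DW, Matrix.diagonal_apply, Matrix.vecHead, Matrix.vecTail]

private theorem emb23_DW (z : Circle) : emb23 (DW z) = T3 1 z := by
  apply Subtype.ext
  show E23m (DW z).1 = (Matrix.diagonal ![((1 : Circle) : ℂ), (z : Circle), ((1 * z)⁻¹ : Circle)]
      : Matrix (Fin 3) (Fin 3) ℂ)
  ext i j
  fin_cases i <;> fin_cases j <;>
    simp [E23m, DW, Matrix.diagonal_apply, Matrix.vecHead, Matrix.vecTail]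

private theorem comm_c3 (z : Circle) (x : ↥SU2) : T3 z z * emb12 x = emb12 x * T3 z z := by
  apply Subtype.ext
  show (Matrix.diagonal ![(z : ℂ), z, ((z * z)⁻¹ : Circle)] * E12m x.1 : Matrix (Fin 3) (Fin 3) ℂ)
      = E12m x.1 * Matrix.diagonal ![(z : ℂ), z, ((z * z)⁻¹ : Circle)]
  ext i j
  fin_cases i <;> fin_cases j <;>
    simp [E12m, Matrix.mul_apply, Fin.sum_univ_three, Matrix.diagonal_apply, Matrix.vecHead, Matrix.vecTail] <;> ring

private theorem comm_c1 (z : Circle) (x : ↥SU2) :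
    T3 (z⁻¹ * z⁻¹) z * emb23 x = emb23 x * T3 (z⁻¹ * z⁻¹) z := by
  apply Subtype.ext
  show (Matrix.diagonal ![((z⁻¹ * z⁻¹ : Circle) : ℂ), z, ((z⁻¹ * z⁻¹ * z)⁻¹ : Circle)] * E23m x.1
      : Matrix (Fin 3) (Fin 3) ℂ)
      = E23m x.1 * Matrix.diagonal ![((z⁻¹ * z⁻¹ : Circle) : ℂ), z, ((z⁻¹ * z⁻¹ * z)⁻¹ : Circle)]
  have h3 : ((( z⁻¹ * z⁻¹ * z)⁻¹ : Circle) : ℂ) = (z : ℂ) := by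
    push_cast [mul_inv, inv_inv]
    have hz : (z : ℂ) ≠ 0 := Circle.coe_ne_zero z
    field_simp
  ext i j
  fin_cases i <;> fin_cases j <;>
    simp [E23m, Matrix.mul_apply, Fin.sum_univ_three, Matrix.diagonal_apply, h3, Matrix.vecHead, Matrix.vecTail] <;> ring

private theorem su2_form' {x : Matrix (Fin 2) (Fin 2) ℂ} (h : x ∈ SU2) :
    ∃ a b : ℂ, a * (starRingEnd ℂ) a + b * (starRingEnd ℂ) b = 1 ∧
      x = !![a, b; -(starRingEnd ℂ) b, (starRingEnd ℂ) a] := by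
  rw [Matrix.mem_specialUnitaryGroup_iff, Matrix.mem_unitaryGroup_iff] at h
  obtain ⟨hu, hd⟩ := h
  have hinv : x⁻¹ = star x := Matrix.inv_eq_right_inv hu
  have hadj : x⁻¹ = x.adjugate := by
    rw [Matrix.inv_def, hd]; simp
  rw [hinv, Matrix.adjugate_fin_two, Matrix.star_eq_conjTranspose] at hadj
  have h00 : (starRingEnd ℂ) (x 0 0) = x 1 1 := by
    have := congrFun (congrFun hadj 0) 0; simpa [Matrix.conjTranspose_apply] using this
  have h10 : (starRingEnd ℂ) (x 1 0) = -(x 0 1) := by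
    have := congrFun (congrFun hadj 0) 1; simpa [Matrix.conjTranspose_apply] using this
  have h10' : x 1 0 = -(starRingEnd ℂ) (x 0 1) := by
    have := congrArg (starRingEnd ℂ) h10; simpa using this
  refine ⟨x 0 0, x 0 1, ?_, ?_⟩
  · rw [Matrix.det_fin_two, h10', ← h00] at hd
    linear_combination hd
  · ext i j
    fin_cases i <;> fin_cases j <;> simp [h10', ← h00]

private theorem su2_centralizer' {x y z : Matrix (Fin 2) (Fin 2) ℂ}
    (hx : x ∈ SU2)
    (hy : y ∈ SU2)
    (hz : z ∈ SU2)
    (hx1 : x ≠ 1) (hx2 : x ≠ -1)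
    (hxy : x * y = y * x) (hxz : x * z = z * x) : y * z = z * y := by
  obtain ⟨a, b, hab, rfl⟩ := su2_form' hx
  obtain ⟨c, d, hcd, rfl⟩ := su2_form' hy
  obtain ⟨e, g, heg, rfl⟩ := su2_form' hz
  have P1y : b * (starRingEnd ℂ) d = d * (starRingEnd ℂ) b := by
    have := congrFun (congrFun hxy 0) 0
    simp [Matrix.mul_apply, Fin.sum_univ_two] at this
    linear_combination -this
  have P2y : d * (a - (starRingEnd ℂ) a) = b * (c - (starRingEnd ℂ) c) := by
    have := congrFun (congrFun hxy 0) 1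
    simp [Matrix.mul_apply, Fin.sum_univ_two] at this
    linear_combination this
  have P1z : b * (starRingEnd ℂ) g = g * (starRingEnd ℂ) b := by
    have := congrFun (congrFun hxz 0) 0
    simp [Matrix.mul_apply, Fin.sum_univ_two] at this
    linear_combination -this
  have P2z : g * (a - (starRingEnd ℂ) a) = b * (e - (starRingEnd ℂ) e) := by
    have := congrFun (congrFun hxz 0) 1
    simp [Matrix.mul_apply, Fin.sum_univ_two] at this
    linear_combination this
  have key : d * (starRingEnd ℂ) g = g * (starRingEnd ℂ) d ∧
      g * (c - (starRingEnd ℂ) c) = d * (e - (starRingEnd ℂ) e) := by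
    by_cases hb : b = 0
    · have ha : a - (starRingEnd ℂ) a ≠ 0 := by
        intro ha0
        have haa : (starRingEnd ℂ) a = a := by linear_combination -ha0
        have ha2 : a * a = 1 := by
          have := hab; rw [hb, haa] at this; simpa using this
        rcases mul_self_eq_one_iff.mp ha2 with h1 | h1
        · refine hx1 ?_
          subst h1; ext i j; fin_cases i <;> fin_cases j <;> simp [hb]
        · refine hx2 ?_
          subst h1; ext i j; fin_cases i <;> fin_cases j <;> simp [hb]
      have hd0 : d = 0 := by
        have := P2y; rw [hb] at this; simpa [ha] using this
      have hg0 : g = 0 := by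
        have := P2z; rw [hb] at this; simpa [ha] using this
      simp [hd0, hg0]
    · constructor
      · have h1 : b * (d * (starRingEnd ℂ) g) = b * (g * (starRingEnd ℂ) d) := by
          linear_combination d * P1z - g * P1y
        exact mul_left_cancel₀ hb h1
      · have h1 : b * (g * (c - (starRingEnd ℂ) c)) = b * (d * (e - (starRingEnd ℂ) e)) := by
          linear_combination d * P2z - g * P2y
        exact mul_left_cancel₀ hb h1
  obtain ⟨E1, E2⟩ := key
  have E1c : (starRingEnd ℂ) d * g = (starRingEnd ℂ) g * d := by
    have := congrArg (starRingEnd ℂ) E1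
    simpa [_root_.map_mul, mul_comm] using this
  have E2c : (starRingEnd ℂ) g * ((starRingEnd ℂ) c - c) =
      (starRingEnd ℂ) d * ((starRingEnd ℂ) e - e) := by
    have := congrArg (starRingEnd ℂ) E2
    simpa [_root_.map_mul, _root_.map_sub] using this
  ext i j
  fin_cases i <;> fin_cases j <;>
    · simp [Matrix.mul_apply, Fin.sum_univ_two]
      first
      | linear_combination E1 | linear_combination -E1
      | linear_combination E2 | linear_combination -E2
      | linear_combination E1c | linear_combination -E1c
      | linear_combination E2c | linear_combination -E2c

private theorem circle_exp_pow (t : ℝ) (n : ℕ) : Circle.exp t ^ n = Circle.exp (n * t) := by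
  induction n with
  | zero => simp
  | succ k ih => rw [pow_succ, ih, ← Circle.exp_add]; congr 1; push_cast; ring

private theorem circle_root (n : ℕ) (hn : (n:ℝ) ≠ 0) (z : Circle) : ∃ w : Circle, w^n = z := by
  refine ⟨Circle.exp ((Complex.arg z) / n), ?_⟩
  rw [circle_exp_pow, mul_div_cancel₀ _ hn, Circle.exp_arg]

private theorem mem_circle_of_mul_conj {a : ℂ} (h : a * (starRingEnd ℂ) a = 1) :
    a ∈ Submonoid.unitSphere ℂ := by
  have h1 : ((‖a‖ : ℂ))^2 = 1 := by rw [← Complex.mul_conj']; exact h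
  have h2 : (‖a‖)^2 = 1 := by exact_mod_cast h1
  have h3 : ‖a‖ = 1 := by nlinarith [norm_nonneg a]
  simp only [Submonoid.unitSphere, Submonoid.mem_mk, Subsemigroup.mem_mk]
  exact mem_sphere_zero_iff_norm.mpr h3

private theorem su2_diag (x : ↥SU2) : ∃ (P : ↥SU2) (z : Circle), x * P = P * DW z := by
  obtain ⟨a, b, hab, hx⟩ := su2_form' x.2
  by_cases hb : b = 0
  · subst hb
    have ha : a * (starRingEnd ℂ) a = 1 := by simpa using hab
    refine ⟨1, ⟨a, mem_circle_of_mul_conj ha⟩, ?_⟩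
    rw [mul_one, one_mul]
    apply Subtype.ext
    show x.1 = (DW _).1
    rw [hx]
    show _ = !![a, 0; 0, _]
    erw [← circle_coe_conj]
    norm_num
  · -- eigenvalue
    set r : ℝ := a.re with hr
    have hnsq : Complex.normSq a + Complex.normSq b = 1 := by
      have : ((Complex.normSq a : ℂ)) + (Complex.normSq b : ℂ) = 1 := by
        rw [← Complex.mul_conj, ← Complex.mul_conj]; exact hab
      exact_mod_cast this
    have hb2 : 0 < Complex.normSq b := Complex.normSq_pos.mpr hb
    have hr2 : 1 - r^2 ≥ 0 := by
      have := Complex.normSq_apply a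
      nlinarith [sq_nonneg a.im]
    set s : ℝ := Real.sqrt (1 - r^2) with hs
    have hs2 : s^2 = 1 - r^2 := Real.sq_sqrt hr2
    set lc : ℂ := (r : ℂ) + (s : ℂ) * I with hlc
    have hI : (I : ℂ) * I = -1 := by
      have := Complex.I_sq; rw [pow_two] at this; exact this
    have hs2c : (s:ℂ)^2 = 1 - (r:ℂ)^2 := by exact_mod_cast congrArg (Complex.ofReal) hs2
    have hconj : (starRingEnd ℂ) lc = (r : ℂ) - (s : ℂ) * I := by
      simp [hlc, Complex.conj_ofReal]; ring
    have hquad : lc * lc = 2 * (r:ℂ) * lc - 1 := by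
      rw [hlc]; linear_combination (s:ℂ)^2 * hI - hs2c
    have hquadc : (starRingEnd ℂ) lc * (starRingEnd ℂ) lc = 2 * (r:ℂ) * (starRingEnd ℂ) lc - 1 := by
      rw [hconj]; linear_combination (s:ℂ)^2 * hI - hs2c
    have hre : a + (starRingEnd ℂ) a = 2 * (r:ℂ) := by
      rw [Complex.add_conj]; norm_num; exact hr.symm
    have hlmem : lc ∈ Submonoid.unitSphere ℂ := by
      apply mem_circle_of_mul_conj
      rw [hconj, hlc]
      linear_combination -(s:ℂ)^2 * hI + hs2c
    set Q : ℂ := lc - a with hQ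
    have hQc : Q = ((s - a.im : ℝ) : ℂ) * I := by
      rw [hQ, hlc]
      apply Complex.ext <;> simp [hr]
    -- norms
    set n : ℝ := Real.sqrt (Complex.normSq b + (s - a.im)^2) with hn
    have hnpos : 0 < n := Real.sqrt_pos.mpr (by nlinarith)
    have hn2 : n^2 = Complex.normSq b + (s - a.im)^2 := Real.sq_sqrt (by nlinarith)
    have hnne : ((n:ℝ):ℂ) ≠ 0 := by exact_mod_cast hnpos.ne'
    have hQQ : Q * (starRingEnd ℂ) Q = (((s - a.im)^2 : ℝ) : ℂ) := by
      rw [Complex.mul_conj, hQc]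
      push_cast
      simp [Complex.normSq_apply]
      ring
    have hbb : b * (starRingEnd ℂ) b = ((Complex.normSq b : ℝ) : ℂ) := Complex.mul_conj b
    have hn2c : ((n:ℝ):ℂ)^2 = ((Complex.normSq b : ℝ):ℂ) + (((s - a.im)^2 : ℝ) : ℂ) := by
      exact_mod_cast congrArg (Complex.ofReal) hn2
    have hP : (b / n) * (starRingEnd ℂ) (b / n) +
        (-(starRingEnd ℂ) Q / n) * (starRingEnd ℂ) (-(starRingEnd ℂ) Q / n) = 1 := by
      rw [map_div₀, map_div₀, map_neg, Complex.conj_conj, Complex.conj_ofReal]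
      field_simp
      linear_combination hbb + hQQ - hn2c
    refine ⟨mk2 (b / n) (-(starRingEnd ℂ) Q / n) hP, ⟨lc, hlmem⟩, ?_⟩
    -- unscaled matrices
    set M : Matrix (Fin 2) (Fin 2) ℂ := !![b, -(starRingEnd ℂ) Q; Q, (starRingEnd ℂ) b] with hM
    have hPM : (mk2 (b / n) (-(starRingEnd ℂ) Q / n) hP).1 = (((n:ℝ):ℂ)⁻¹) • M := by
      show !![b/n, -(starRingEnd ℂ) Q/n; _, _] = _
      rw [hM]
      ext i j
      fin_cases i <;> fin_cases j <;>
        simp [map_div₀, Complex.conj_ofReal, Matrix.smul_apply, div_eq_inv_mul, mul_comm]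
    have key : x.1 * M = M * (DW ⟨lc, hlmem⟩).1 := by
      have hDW : (DW ⟨lc, hlmem⟩).1 = !![lc, 0; 0, (starRingEnd ℂ) lc] := by
        show !![lc, 0; 0, _] = _
        erw [← circle_coe_conj]
      rw [hDW, hx, hM]
      ext i j
      fin_cases i <;> fin_cases j <;>
        simp [Matrix.mul_apply, Fin.sum_univ_two, hQ]
      · ring
      · linear_combination hab + hquadc - (starRingEnd ℂ) lc * hre
      · linear_combination -hab - hquad + lc * hre
      · ring
    apply Subtype.ext
    show x.1 * _ = _ * (DW _).1
    rw [hPM, Matrix.mul_smul, Matrix.smul_mul, key]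


private def inv2 (x : ↥SU2) : ↥SU2 :=
  ⟨star x.1, by
    obtain ⟨hu, hd⟩ := Matrix.mem_specialUnitaryGroup_iff.mp x.2
    rw [Matrix.mem_specialUnitaryGroup_iff]
    constructor
    · rw [Matrix.mem_unitaryGroup_iff, star_star]
      exact Matrix.mem_unitaryGroup_iff'.mp hu
    · rw [Matrix.star_eq_conjTranspose, Matrix.det_conjTranspose, hd]
      simp⟩

private theorem mul_inv2 (x : ↥SU2) : x * inv2 x = 1 := by
  apply Subtype.ext
  show x.1 * star x.1 = 1
  exact Matrix.mem_unitaryGroup_iff.mp (Matrix.mem_specialUnitaryGroup_iff.mp x.2).1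

-- ====== new material ======

private def Jel : ↥SU2 := mk2 0 1 (by norm_num)
private def Jel' : ↥SU2 := mk2 0 (-1) (by norm_num)

private theorem J_mul_J' : Jel * Jel' = 1 := by
  apply Subtype.ext
  show (!![(0:ℂ), 1; -(starRingEnd ℂ) 1, (starRingEnd ℂ) 0] *
    !![(0:ℂ), -1; -(starRingEnd ℂ) (-1), (starRingEnd ℂ) 0] : Matrix (Fin 2) (Fin 2) ℂ) = 1
  rw [Matrix.mul_fin_two]
  norm_num
  exact Matrix.one_fin_two.symm

private theorem DW_comm_identity (w : Circle) :
    DW w * Jel * DW w⁻¹ * Jel' = DW (w * w) := by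
  apply Subtype.ext
  show (!![(w : ℂ), 0; 0, ((w⁻¹ : Circle) : ℂ)] *
      !![(0:ℂ), 1; -(starRingEnd ℂ) 1, (starRingEnd ℂ) 0] *
      !![((w⁻¹ : Circle) : ℂ), 0; 0, (((w⁻¹)⁻¹ : Circle) : ℂ)] *
      !![(0:ℂ), -1; -(starRingEnd ℂ) (-1), (starRingEnd ℂ) 0] : Matrix (Fin 2) (Fin 2) ℂ)
      = !![((w * w : Circle) : ℂ), 0; 0, (((w * w)⁻¹ : Circle) : ℂ)]
  push_cast [mul_inv, inv_inv]
  rw [Matrix.mul_fin_two, Matrix.mul_fin_two, Matrix.mul_fin_two]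
  norm_num

private theorem T3_continuous (g1 g2 : ℝ → Circle) (h1 : Continuous g1) (h2 : Continuous g2) :
    Continuous fun t => T3 (g1 t) (g2 t) := by
  apply Continuous.subtype_mk
  apply continuous_matrix
  intro i j
  have hcoe : ∀ (g : ℝ → Circle), Continuous g → Continuous fun t => ((g t : Circle) : ℂ) :=
    fun g hg => continuous_subtype_val.comp hg
  have hinv : ∀ (g : ℝ → Circle), Continuous g → Continuous fun t => (((g t : Circle) : ℂ))⁻¹ :=
    fun g hg => (hcoe g hg).inv₀ (fun t => Circle.coe_ne_zero _)
  fin_cases i <;> fin_cases j <;>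
    simp [T3, Matrix.diagonal_apply, Matrix.vecHead, Matrix.vecTail] <;>
    first
      | exact continuous_const
      | exact hcoe _ h1
      | exact hcoe _ h2
      | exact (hinv _ h2).mul (hinv _ h1)
      | exact (hinv _ h1).mul (hinv _ h2)

section F
variable (f : ↥SU3 →* ↥SU2)

private theorem pm_one (hf : Continuous f) (g : Circle → ↥SU3)
    (hg : Continuous fun t : ℝ => g (Circle.exp t))
    (hone : g 1 = 1)
    (hpm : ∀ z, (f (g z) : Matrix (Fin 2) (Fin 2) ℂ) = 1 ∨
      (f (g z) : Matrix (Fin 2) (Fin 2) ℂ) = -1) :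
    ∀ z, f (g z) = 1 := by
  have hentry : Continuous (fun m : Matrix (Fin 2) (Fin 2) ℂ => m 0 0) := by fun_prop
  have key : ∀ t : ℝ, (f (g (Circle.exp t)) : Matrix (Fin 2) (Fin 2) ℂ) = 1 := by
    set φ : ℝ → ℝ := fun t => ((f (g (Circle.exp t)) : Matrix (Fin 2) (Fin 2) ℂ) 0 0).re with hφ
    have hφc : Continuous φ := by
      apply Complex.continuous_re.comp
      exact hentry.comp (continuous_subtype_val.comp (hf.comp hg))
    have hgone : f (g (Circle.exp 0)) = 1 := by rw [Circle.exp_zero, hone, _root_.map_one]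
    have hφ0 : φ 0 = 1 := by
      rw [hφ]
      simp only [hgone, OneMemClass.coe_one, Matrix.one_apply_eq]
      norm_num
    have hval : ∀ t, φ t = 1 ∨ φ t = -1 := by
      intro t
      rcases hpm (Circle.exp t) with h | h <;> rw [hφ] <;> simp only [h]
      · left; simp
      · right; simp [Matrix.neg_apply]
    intro t
    rcases hpm (Circle.exp t) with h | h
    · exact h
    · exfalso
      have hφt : φ t = -1 := by rw [hφ]; simp only [h]; simp [Matrix.neg_apply]
      have h0mem : (0 : ℝ) ∈ Set.uIcc (φ 0) (φ t) := by
        rw [hφ0, hφt]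
        rw [Set.mem_uIcc]
        norm_num
      obtain ⟨t₀, _, ht₀⟩ := intermediate_value_uIcc (a := (0:ℝ)) (b := t) hφc.continuousOn h0mem
      rcases hval t₀ with h' | h' <;> rw [ht₀] at h' <;> norm_num at h'
  intro z
  have hz : Circle.exp (Complex.arg z) = z := Circle.exp_arg z
  apply Subtype.ext
  rw [← hz]
  rw [key _]
  rfl

private theorem block12 (hf : Continuous f) :
    (∀ z, f (T3 z z⁻¹) = 1) ∨ (∀ z, f (T3 z z) = 1) := by
  by_cases hcomm : ∀ x y : ↥SU2, f (emb12 x) * f (emb12 y) = f (emb12 y) * f (emb12 x)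
  · left
    intro z
    obtain ⟨w, hw⟩ := circle_root 2 (by norm_num) z
    have hw2 : w * w = z := by rw [← hw, pow_two]
    have swap : f (emb12 Jel) * f (emb12 (DW w⁻¹)) = f (emb12 (DW w⁻¹)) * f (emb12 Jel) :=
      hcomm _ _
    have hDWpair : f (emb12 (DW w)) * f (emb12 (DW w⁻¹)) = 1 := by
      rw [← _root_.map_mul, ← _root_.map_mul, DW_mul, mul_inv_cancel, DW_one,
        _root_.map_one, _root_.map_one]
    have hJpair : f (emb12 Jel) * f (emb12 Jel') = 1 := by
      rw [← _root_.map_mul, ← _root_.map_mul, J_mul_J', _root_.map_one, _root_.map_one]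
    have hbig : f (emb12 (DW w)) * f (emb12 Jel) * f (emb12 (DW w⁻¹)) * f (emb12 Jel')
        = f (emb12 (DW (w * w))) := by
      have := congrArg f (congrArg emb12 (DW_comm_identity w))
      simpa only [_root_.map_mul] using this
    have final : f (emb12 (DW (w * w))) = 1 := by
      rw [← hbig, mul_assoc (f (emb12 (DW w))) (f (emb12 Jel)) (f (emb12 (DW w⁻¹))), swap,
        ← mul_assoc, mul_assoc (f (emb12 (DW w)) * f (emb12 (DW w⁻¹))), hJpair, mul_one, hDWpair]
    rw [← hw2, ← emb12_DW]
    exact final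
  · right
    push_neg at hcomm
    obtain ⟨xx, yy, hxy⟩ := hcomm
    refine pm_one f hf (fun z => T3 z z) ?_ T3_one ?_
    · exact T3_continuous _ _ Circle.exp.continuous Circle.exp.continuous
    intro z
    by_contra hcon
    push_neg at hcon
    obtain ⟨h1, h2⟩ := hcon
    apply hxy
    have hxc : (f (T3 z z) : Matrix (Fin 2) (Fin 2) ℂ) * (f (emb12 xx)) =
        (f (emb12 xx) : Matrix (Fin 2) (Fin 2) ℂ) * (f (T3 z z)) := by
      have := congrArg (fun u => (f u : Matrix (Fin 2) (Fin 2) ℂ)) (comm_c3 z xx)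
      simpa only [_root_.map_mul, MulMemClass.coe_mul] using this
    have hyc : (f (T3 z z) : Matrix (Fin 2) (Fin 2) ℂ) * (f (emb12 yy)) =
        (f (emb12 yy) : Matrix (Fin 2) (Fin 2) ℂ) * (f (T3 z z)) := by
      have := congrArg (fun u => (f u : Matrix (Fin 2) (Fin 2) ℂ)) (comm_c3 z yy)
      simpa only [_root_.map_mul, MulMemClass.coe_mul] using this
    have := su2_centralizer' (f (T3 z z)).2 (f (emb12 xx)).2 (f (emb12 yy)).2 h1 h2 hxc hyc
    apply Subtype.ext
    simpa only [MulMemClass.coe_mul] using this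

private theorem block23 (hf : Continuous f) :
    (∀ z, f (T3 1 z) = 1) ∨ (∀ z, f (T3 (z⁻¹ * z⁻¹) z) = 1) := by
  by_cases hcomm : ∀ x y : ↥SU2, f (emb23 x) * f (emb23 y) = f (emb23 y) * f (emb23 x)
  · left
    intro z
    obtain ⟨w, hw⟩ := circle_root 2 (by norm_num) z
    have hw2 : w * w = z := by rw [← hw, pow_two]
    have swap : f (emb23 Jel) * f (emb23 (DW w⁻¹)) = f (emb23 (DW w⁻¹)) * f (emb23 Jel) :=
      hcomm _ _
    have hDWpair : f (emb23 (DW w)) * f (emb23 (DW w⁻¹)) = 1 := by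
      rw [← _root_.map_mul, ← _root_.map_mul, DW_mul, mul_inv_cancel, DW_one,
        _root_.map_one, _root_.map_one]
    have hJpair : f (emb23 Jel) * f (emb23 Jel') = 1 := by
      rw [← _root_.map_mul, ← _root_.map_mul, J_mul_J', _root_.map_one, _root_.map_one]
    have hbig : f (emb23 (DW w)) * f (emb23 Jel) * f (emb23 (DW w⁻¹)) * f (emb23 Jel')
        = f (emb23 (DW (w * w))) := by
      have := congrArg f (congrArg emb23 (DW_comm_identity w))
      simpa only [_root_.map_mul] using this
    have final : f (emb23 (DW (w * w))) = 1 := by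
      rw [← hbig, mul_assoc (f (emb23 (DW w))) (f (emb23 Jel)) (f (emb23 (DW w⁻¹))), swap,
        ← mul_assoc, mul_assoc (f (emb23 (DW w)) * f (emb23 (DW w⁻¹))), hJpair, mul_one, hDWpair]
    rw [← hw2, ← emb23_DW]
    exact final
  · right
    push_neg at hcomm
    obtain ⟨xx, yy, hxy⟩ := hcomm
    have hone : T3 ((1 : Circle)⁻¹ * (1 : Circle)⁻¹) 1 = 1 := by
      rw [show ((1 : Circle)⁻¹ * (1 : Circle)⁻¹) = 1 by simp]
      exact T3_one
    refine pm_one f hf (fun z => T3 (z⁻¹ * z⁻¹) z) ?_ hone ?_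
    · exact T3_continuous _ _ (by fun_prop) Circle.exp.continuous
    intro z
    by_contra hcon
    push_neg at hcon
    obtain ⟨h1, h2⟩ := hcon
    apply hxy
    have hxc : (f (T3 (z⁻¹ * z⁻¹) z) : Matrix (Fin 2) (Fin 2) ℂ) * (f (emb23 xx)) =
        (f (emb23 xx) : Matrix (Fin 2) (Fin 2) ℂ) * (f (T3 (z⁻¹ * z⁻¹) z)) := by
      have := congrArg (fun u => (f u : Matrix (Fin 2) (Fin 2) ℂ)) (comm_c1 z xx)
      simpa only [_root_.map_mul, MulMemClass.coe_mul] using this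
    have hyc : (f (T3 (z⁻¹ * z⁻¹) z) : Matrix (Fin 2) (Fin 2) ℂ) * (f (emb23 yy)) =
        (f (emb23 yy) : Matrix (Fin 2) (Fin 2) ℂ) * (f (T3 (z⁻¹ * z⁻¹) z)) := by
      have := congrArg (fun u => (f u : Matrix (Fin 2) (Fin 2) ℂ)) (comm_c1 z yy)
      simpa only [_root_.map_mul, MulMemClass.coe_mul] using this
    have := su2_centralizer' (f (T3 (z⁻¹ * z⁻¹) z)).2 (f (emb23 xx)).2 (f (emb23 yy)).2 h1 h2
      hxc hyc
    apply Subtype.ext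
    simpa only [MulMemClass.coe_mul] using this

private theorem torus_killed (hf : Continuous f) : ∀ z w, f (T3 z w) = 1 := by
  intro z w
  rcases block12 f hf with h12 | h12 <;> rcases block23 f hf with h23 | h23
  · have : T3 z z⁻¹ * T3 1 (z * w) = T3 z w := by
      rw [T3_mul]; congr 1 <;> (ext; push_cast [mul_inv, inv_inv]; field_simp)
    rw [← this, _root_.map_mul, h12, h23, mul_one]
  · have : T3 (z⁻¹ * w⁻¹ * w⁻¹) (z⁻¹ * w⁻¹ * w⁻¹)⁻¹ *
        T3 ((w⁻¹ * z⁻¹)⁻¹ * (w⁻¹ * z⁻¹)⁻¹) (w⁻¹ * z⁻¹) = T3 z w := by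
      rw [T3_mul]; congr 1 <;> (ext; push_cast [mul_inv, inv_inv]; field_simp) <;> ring
    rw [← this, _root_.map_mul, h12 (z⁻¹ * w⁻¹ * w⁻¹), h23 (w⁻¹ * z⁻¹), mul_one]
  · have : T3 z z * T3 1 (z⁻¹ * w) = T3 z w := by
      rw [T3_mul]; congr 1 <;> (ext; push_cast [mul_inv, inv_inv]; field_simp)
    rw [← this, _root_.map_mul, h12, h23, mul_one]
  · obtain ⟨w₀, hw₀⟩ := circle_root 3 (by norm_num) (w * z⁻¹)
    rw [pow_succ, pow_two] at hw₀
    have : T3 (w * w₀⁻¹) (w * w₀⁻¹) * T3 (w₀⁻¹ * w₀⁻¹) w₀ = T3 z w := by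
      rw [T3_mul]
      congr 1
      · have h3 : w * w₀⁻¹ * (w₀⁻¹ * w₀⁻¹) = w * (w₀ * w₀ * w₀)⁻¹ := by
          ext; push_cast [mul_inv, inv_inv, SubmonoidClass.coe_pow]; field_simp; try ring
        rw [h3, hw₀]
        ext; push_cast [mul_inv, inv_inv, SubmonoidClass.coe_pow]; field_simp; try ring
      · ext; push_cast [mul_inv, inv_inv, SubmonoidClass.coe_pow]; field_simp; try ring
    rw [← this, _root_.map_mul, h12, h23, mul_one]

private theorem emb12_killed (hf : Continuous f) : ∀ x, f (emb12 x) = 1 := by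
  intro x
  obtain ⟨P, z, hPz⟩ := su2_diag x
  have h1 : f (emb12 x) * f (emb12 P) = f (emb12 P) := by
    have := congrArg f (congrArg emb12 hPz)
    simp only [_root_.map_mul] at this
    rw [this, emb12_DW, torus_killed f hf, mul_one]
  have h2 : f (emb12 P) * f (emb12 (inv2 P)) = 1 := by
    rw [← _root_.map_mul, ← _root_.map_mul, mul_inv2, _root_.map_one, _root_.map_one]
  calc f (emb12 x) = f (emb12 x) * (f (emb12 P) * f (emb12 (inv2 P))) := by rw [h2, mul_one]
    _ = (f (emb12 x) * f (emb12 P)) * f (emb12 (inv2 P)) := by rw [mul_assoc]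
    _ = f (emb12 P) * f (emb12 (inv2 P)) := by rw [h1]
    _ = 1 := h2

private theorem emb23_killed (hf : Continuous f) : ∀ x, f (emb23 x) = 1 := by
  intro x
  obtain ⟨P, z, hPz⟩ := su2_diag x
  have h1 : f (emb23 x) * f (emb23 P) = f (emb23 P) := by
    have := congrArg f (congrArg emb23 hPz)
    simp only [_root_.map_mul] at this
    rw [this, emb23_DW, torus_killed f hf, mul_one]
  have h2 : f (emb23 P) * f (emb23 (inv2 P)) = 1 := by
    rw [← _root_.map_mul, ← _root_.map_mul, mul_inv2, _root_.map_one, _root_.map_one]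
  calc f (emb23 x) = f (emb23 x) * (f (emb23 P) * f (emb23 (inv2 P))) := by rw [h2, mul_one]
    _ = (f (emb23 x) * f (emb23 P)) * f (emb23 (inv2 P)) := by rw [mul_assoc]
    _ = f (emb23 P) * f (emb23 (inv2 P)) := by rw [h1]
    _ = 1 := h2


private theorem all_killed (hf : Continuous f) : ∀ x : ↥SU3, f x = 1 := by
  intro x
  -- Step A : clear out the (2,0) entry using an emb23 rotation
  have stepA : ∃ (G1 : ↥SU2) (rr : ℝ), 0 ≤ rr ∧
      ((emb23 G1 * x : ↥SU3) : Matrix (Fin 3) (Fin 3) ℂ) 1 0 = (rr : ℂ) ∧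
      ((emb23 G1 * x : ↥SU3) : Matrix (Fin 3) (Fin 3) ℂ) 2 0 = 0 := by
    set u1 : ℂ := (x : Matrix (Fin 3) (Fin 3) ℂ) 1 0 with hu1
    set u2 : ℂ := (x : Matrix (Fin 3) (Fin 3) ℂ) 2 0 with hu2
    set r : ℝ := Real.sqrt (Complex.normSq u1 + Complex.normSq u2) with hrdef
    have hnonneg : 0 ≤ Complex.normSq u1 + Complex.normSq u2 :=
      add_nonneg (Complex.normSq_nonneg _) (Complex.normSq_nonneg _)
    have hr2 : r^2 = Complex.normSq u1 + Complex.normSq u2 := Real.sq_sqrt hnonneg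
    have hrpos : 0 ≤ r := Real.sqrt_nonneg _
    have e1 : (starRingEnd ℂ) u1 * u1 = ((Complex.normSq u1 : ℝ) : ℂ) := by
      rw [mul_comm]; exact Complex.mul_conj u1
    have e2 : (starRingEnd ℂ) u2 * u2 = ((Complex.normSq u2 : ℝ) : ℂ) := by
      rw [mul_comm]; exact Complex.mul_conj u2
    have hr2c : ((r:ℝ):ℂ)^2 = ((Complex.normSq u1 : ℝ):ℂ) + ((Complex.normSq u2 : ℝ):ℂ) := by
      exact_mod_cast congrArg (Complex.ofReal) hr2
    by_cases hr : r = 0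
    · have h0 : Complex.normSq u1 + Complex.normSq u2 = 0 := by rw [← hr2, hr]; ring
      have h1 : u1 = 0 := by
        have n1 := Complex.normSq_nonneg u1; have n2 := Complex.normSq_nonneg u2
        have : Complex.normSq u1 = 0 := by linarith
        exact Complex.normSq_eq_zero.mp this
      have h2 : u2 = 0 := by
        have n1 := Complex.normSq_nonneg u1; have n2 := Complex.normSq_nonneg u2
        have : Complex.normSq u2 = 0 := by linarith
        exact Complex.normSq_eq_zero.mp this
      refine ⟨1, 0, le_refl _, ?_, ?_⟩ <;>
        rw [_root_.map_one, one_mul] <;> push_cast <;> [exact h1; exact h2]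
    · have hrne : ((r:ℝ):ℂ) ≠ 0 := by exact_mod_cast hr
      have hmem : ((starRingEnd ℂ) u1 / r) * (starRingEnd ℂ) ((starRingEnd ℂ) u1 / r) +
          ((starRingEnd ℂ) u2 / r) * (starRingEnd ℂ) ((starRingEnd ℂ) u2 / r) = 1 := by
        simp only [map_div₀, Complex.conj_conj, Complex.conj_ofReal]
        field_simp
        linear_combination e1 + e2 - hr2c
      refine ⟨mk2 _ _ hmem, r, hrpos, ?_, ?_⟩
      · show ((emb23 (mk2 _ _ hmem)).1 * x.1) 1 0 = _
        rw [emb23_apply, Matrix.mul_apply, Fin.sum_univ_three]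
        simp only [mk2, map_div₀, Complex.conj_conj, Complex.conj_ofReal]
        simp [Matrix.vecHead, Matrix.vecTail, ← hu1, ← hu2]
        field_simp
        linear_combination e1 + e2 - hr2c
      · show ((emb23 (mk2 _ _ hmem)).1 * x.1) 2 0 = _
        rw [emb23_apply, Matrix.mul_apply, Fin.sum_univ_three]
        simp only [mk2, map_div₀, Complex.conj_conj, Complex.conj_ofReal]
        simp [Matrix.vecHead, Matrix.vecTail, ← hu1, ← hu2]
        field_simp
        ring
  obtain ⟨G1, rr, hrr, hy10, hy20⟩ := stepA
  set y : ↥SU3 := emb23 G1 * x with hy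
  set a : ℂ := (y : Matrix (Fin 3) (Fin 3) ℂ) 0 0 with ha
  have hyu : star (y : Matrix (Fin 3) (Fin 3) ℂ) * y = 1 :=
    (Matrix.mem_unitaryGroup_iff'.mp (Matrix.mem_specialUnitaryGroup_iff.mp y.2).1)
  have hcol : (starRingEnd ℂ) a * a + (rr:ℂ) * (rr:ℂ) = 1 := by
    have h00 := congrFun (congrFun hyu 0) 0
    simp only [Matrix.mul_apply, Fin.sum_univ_three, Matrix.star_eq_conjTranspose,
      Matrix.conjTranspose_apply, Matrix.one_apply_eq, hy10, hy20, Complex.star_def,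
      Complex.conj_ofReal, star_zero] at h00
    rw [← ha] at h00
    linear_combination h00
  have hmem2 : (starRingEnd ℂ) a * (starRingEnd ℂ) ((starRingEnd ℂ) a) +
      ((rr:ℝ):ℂ) * (starRingEnd ℂ) ((rr:ℝ):ℂ) = 1 := by
    rw [Complex.conj_conj, Complex.conj_ofReal]
    exact hcol
  set G2 : ↥SU2 := mk2 _ _ hmem2 with hG2
  set M : ↥SU3 := emb12 G2 * y with hM
  have hMmat : (M : Matrix (Fin 3) (Fin 3) ℂ) =
      !![(starRingEnd ℂ) a, (rr:ℂ), 0; -(rr:ℂ), a, 0; 0, 0, 1] * y.1 := by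
    show (emb12 G2).1 * y.1 = _
    rw [emb12_apply]
    congr 1
    show !![(starRingEnd ℂ) a, ((rr:ℝ):ℂ), 0; -(starRingEnd ℂ) ((rr:ℝ):ℂ),
      (starRingEnd ℂ) ((starRingEnd ℂ) a), 0; 0, 0, 1] = _
    rw [Complex.conj_conj, Complex.conj_ofReal]
  have hM00 : (M : Matrix (Fin 3) (Fin 3) ℂ) 0 0 = 1 := by
    rw [hMmat, Matrix.mul_apply, Fin.sum_univ_three]
    simp [Matrix.vecHead, Matrix.vecTail, ← ha, hy10, hy20]
    linear_combination hcol
  have hM10 : (M : Matrix (Fin 3) (Fin 3) ℂ) 1 0 = 0 := by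
    rw [hMmat, Matrix.mul_apply, Fin.sum_univ_three]
    simp [Matrix.vecHead, Matrix.vecTail, ← ha, hy10, hy20]
    ring
  have hM20 : (M : Matrix (Fin 3) (Fin 3) ℂ) 2 0 = 0 := by
    rw [hMmat, Matrix.mul_apply, Fin.sum_univ_three]
    simp [Matrix.vecHead, Matrix.vecTail, hy20]
  have hMu : star (M : Matrix (Fin 3) (Fin 3) ℂ) * M = 1 :=
    (Matrix.mem_unitaryGroup_iff'.mp (Matrix.mem_specialUnitaryGroup_iff.mp M.2).1)
  have hM01 : (M : Matrix (Fin 3) (Fin 3) ℂ) 0 1 = 0 := by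
    have h01 := congrFun (congrFun hMu 0) 1
    simp only [Matrix.mul_apply, Fin.sum_univ_three, Matrix.star_eq_conjTranspose,
      Matrix.conjTranspose_apply, Matrix.one_apply, hM00, hM10, hM20, star_zero, star_one,
      zero_mul, one_mul, add_zero, zero_add] at h01
    simpa using h01
  have hM02 : (M : Matrix (Fin 3) (Fin 3) ℂ) 0 2 = 0 := by
    have h02 := congrFun (congrFun hMu 0) 2
    simp only [Matrix.mul_apply, Fin.sum_univ_three, Matrix.star_eq_conjTranspose,
      Matrix.conjTranspose_apply, Matrix.one_apply, hM00, hM10, hM20, star_zero, star_one,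
      zero_mul, one_mul, add_zero, zero_add] at h02
    simpa using h02
  set Vm : Matrix (Fin 2) (Fin 2) ℂ :=
    !![(M : Matrix (Fin 3) (Fin 3) ℂ) 1 1, (M : Matrix (Fin 3) (Fin 3) ℂ) 1 2;
       (M : Matrix (Fin 3) (Fin 3) ℂ) 2 1, (M : Matrix (Fin 3) (Fin 3) ℂ) 2 2] with hVm
  have memV : Vm ∈ SU2 := by
    rw [Matrix.mem_specialUnitaryGroup_iff, Matrix.mem_unitaryGroup_iff']
    have h11 := congrFun (congrFun hMu 1) 1
    have h12 := congrFun (congrFun hMu 1) 2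
    have h21 := congrFun (congrFun hMu 2) 1
    have h22 := congrFun (congrFun hMu 2) 2
    simp only [Matrix.mul_apply, Fin.sum_univ_three, Matrix.star_eq_conjTranspose,
      Matrix.conjTranspose_apply, Matrix.one_apply, hM01, hM02, star_zero, zero_mul, mul_zero,
      zero_add, add_zero] at h11 h12 h21 h22
    norm_num [Fin.ext_iff] at h11 h12 h21 h22
    constructor
    · ext i j
      fin_cases i <;> fin_cases j <;>
        · simp [hVm, Matrix.mul_apply, Fin.sum_univ_two, Matrix.star_eq_conjTranspose,
            Matrix.conjTranspose_apply, Matrix.one_apply, Matrix.vecHead, Matrix.vecTail]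
          first
            | linear_combination h11 | linear_combination h12
            | linear_combination h21 | linear_combination h22
    · have hdet : (M : Matrix (Fin 3) (Fin 3) ℂ).det = 1 :=
        (Matrix.mem_specialUnitaryGroup_iff.mp M.2).2
      rw [Matrix.det_fin_three, hM01, hM02, hM10, hM20, hM00] at hdet
      rw [Matrix.det_fin_two]
      simp [hVm, Matrix.vecHead, Matrix.vecTail]
      linear_combination hdet
  have hMV : M = emb23 ⟨Vm, memV⟩ := by
    apply Subtype.ext
    rw [emb23_apply]
    show (M : Matrix (Fin 3) (Fin 3) ℂ) = _
    ext i j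
    fin_cases i <;> fin_cases j <;>
      simp only [hVm, Matrix.cons_val', Matrix.cons_val_zero, Matrix.cons_val_one,
        Matrix.head_cons, Matrix.empty_val', Matrix.cons_val_fin_one, Matrix.head_fin_const,
        Matrix.cons_val_two, Matrix.tail_cons] <;>
      first
        | exact hM00 | exact hM01 | exact hM02 | exact hM10 | exact hM20 | rfl
  have hfinal := congrArg f hMV
  rw [hM, hy, _root_.map_mul, _root_.map_mul, emb12_killed f hf, emb23_killed f hf,
    emb23_killed f hf, one_mul, one_mul] at hfinal
  exact hfinal

end F


end SU3TrivialAux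

/-- Every continuous group homomorphism from SU(3) to SU(2) is trivial. -/
theorem su3_to_su2_trivial
    (f : Matrix.specialUnitaryGroup (Fin 3) ℂ →* Matrix.specialUnitaryGroup (Fin 2) ℂ)
    (hf : Continuous f) :
    ∀ A : Matrix.specialUnitaryGroup (Fin 3) ℂ, f A = 1 := by
  intro A
  exact all_killed f hf A
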